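/- For every simple signed graph G, χ(G) ≤ χ_a(G̲), where χ_a(G̲) is the acyclic chromatic number of the underlying graph. -/

import Mathlib

open SimpleGraph

lemma list_prod_pm (l : List ℤ) (h : ∀ x ∈ l, x = 1 ∨ x = -1) : l.prod = 1 ∨ l.prod = -1 := by
  induction l with
  | nil => simp
  | cons a t ih =>
    rcases h a (by simp) with ha | ha <;>
      rcases ih (fun x hx => h x (by simp [hx])) with ht | ht <;> simp [ha, ht]

lemma forest_signs {W : Type*} (H : SimpleGraph W) (hH : H.IsAcyclic)
    (f : W → W → ℤ) (hsym : ∀ u v, f u v = f v u)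
    (hval : ∀ u v, H.Adj u v → f u v = 1 ∨ f u v = -1) :
    ∃ s : W → ℤ, (∀ w, s w = 1 ∨ s w = -1) ∧ ∀ u v, H.Adj u v → s u * s v = f u v := by
  classical
  have huniq := isAcyclic_iff_path_unique.mp hH
  let fE : Sym2 W → ℤ := Sym2.lift ⟨f, fun a b => hsym a b⟩
  have hfE : ∀ a b : W, fE s(a, b) = f a b := fun a b => rfl
  let F : ∀ {a b : W}, H.Walk a b → ℤ := fun w => (w.edges.map fE).prod
  have hFpm : ∀ {a b : W} (w : H.Walk a b), F w = 1 ∨ F w = -1 := by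
    intro a b w
    refine list_prod_pm _ ?_
    rintro x hx
    simp only [List.mem_map] at hx
    obtain ⟨e, he, rfl⟩ := hx
    have hadj := w.edges_subset_edgeSet he
    induction e with
    | h a b => exact hval a b hadj
  let r : W → W := fun v => (H.connectedComponentMk v).out
  have hr : ∀ v, H.Reachable (r v) v := by
    intro v
    exact ConnectedComponent.exact ((H.connectedComponentMk v).out_eq)
  let p : ∀ v, H.Path (r v) v := fun v => (hr v).some.toPath
  refine ⟨fun v => F (p v).1, fun v => hFpm _, ?_⟩
  intro u v huv
  have hru : r u = r v := by
    simp only [r, ConnectedComponent.connectedComponentMk_eq_of_adj huv]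
  have hFpu' : ∀ (a : W) (e : a = r v) (q : H.Path a u), F (e ▸ q).1 = F q.1 := by
    rintro a rfl q; rfl
  let pu : H.Path (r v) u := hru ▸ p u
  have hFpu : F pu.1 = F (p u).1 := hFpu' _ hru (p u)
  have key : F (p v).1 = F pu.1 * f u v := by
    by_cases hv : v ∈ pu.1.support
    · have ht : (pu.1.takeUntil v hv).IsPath := pu.2.takeUntil hv
      have hd : (pu.1.dropUntil v hv).IsPath := pu.2.dropUntil hv
      have h1 : (⟨_, ht⟩ : H.Path (r v) v) = p v := huniq _ _
      have h2 : (⟨_, hd⟩ : H.Path v u) = Path.singleton huv.symm := huniq _ _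
      have hFt : F (pu.1.takeUntil v hv) = F (p v).1 := by
        rw [← h1]
      have hFd : F (pu.1.dropUntil v hv) = f v u := by
        have := congrArg (fun q : H.Path v u => F q.1) h2
        simpa [Path.singleton, F, hfE] using this
      have hsplit : F pu.1
          = F (pu.1.takeUntil v hv) * F (pu.1.dropUntil v hv) := by
        have := congrArg (fun q : H.Walk (r v) u => F q) (pu.1.take_spec hv)
        simp only [F, Walk.edges_append, List.map_append, List.prod_append] at this
        exact this.symm
      rw [hsplit, hFt, hFd, hsym v u]
      rcases hval u v huv with h | h <;> rw [h] <;> ring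
    · have hcp : (pu.1.concat huv).IsPath := by
        rw [← Walk.isPath_reverse_iff, Walk.reverse_concat, Walk.cons_isPath_iff]
        refine ⟨Walk.isPath_reverse_iff _ |>.mpr pu.2, ?_⟩
        rw [Walk.support_reverse, List.mem_reverse]
        exact hv
      have h1 : (⟨_, hcp⟩ : H.Path (r v) v) = p v := huniq _ _
      rw [← h1]
      simp [F, Walk.edges_concat, hfE]
  rw [hFpu] at key
  show F (p u).1 * F (p v).1 = f u v
  rw [key]
  rcases hFpm (p u).1 with h | h <;> rw [h] <;> ring

/-- The colour set `M_n`: `{±1,…,±k}` if `n = 2k`, and `{0,±1,…,±k}` if `n = 2k+1`. -/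
def Mset (n : ℕ) : Set ℤ := {x | 2 * x.natAbs ≤ n ∧ (x ≠ 0 ∨ n % 2 = 1)}

/-- `σ` is a signature: symmetric with values in `{+1, -1}`. -/
def IsSignature {V : Type*} (σ : V → V → ℤ) : Prop :=
  (∀ u v, σ u v = σ v u) ∧ (∀ u v, σ u v = 1 ∨ σ u v = -1)

/-- A proper colouring of the signed graph `(G, σ)`. -/
def IsProperSignedColoring {V : Type*} (G : SimpleGraph V) (σ : V → V → ℤ) (φ : V → ℤ) : Prop :=
  ∀ u v, G.Adj u v → φ u ≠ σ u v * φ v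

/-- `(G, σ)` admits a proper colouring with colours in `M_n`. -/
def SignedColorable {V : Type*} (G : SimpleGraph V) (σ : V → V → ℤ) (n : ℕ) : Prop :=
  ∃ φ : V → ℤ, IsProperSignedColoring G σ φ ∧ ∀ v, φ v ∈ Mset n

/-- The chromatic number of the signed graph `(G, σ)`. -/
noncomputable def signedChromaticNumber {V : Type*} (G : SimpleGraph V) (σ : V → V → ℤ) : ℕ :=
  sInf {n | SignedColorable G σ n}

/-- For every simple signed graph, `χ(G) ≤ χₐ(G̲)`: if the underlying graph has a proper
`n`-colouring in which the union of any two colour classes induces a forest, then the signed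
graph is `n`-colourable. -/
theorem signed_chromatic_le_acyclic_chromatic
    {V : Type*} [Fintype V] (G : SimpleGraph V) (σ : V → V → ℤ) (hσ : IsSignature σ)
    (n : ℕ)
    (h : ∃ c : V → Fin n, (∀ u v, G.Adj u v → c u ≠ c v) ∧
      ∀ i j, (G.induce {v | c v = i ∨ c v = j}).IsAcyclic) :
    signedChromaticNumber G σ ≤ n := by
  classical
  obtain ⟨c, hproper, hacyc⟩ := h
  set A : Fin n → ℕ := fun i => (i.val + 2 - n % 2) / 2 with hAdef
  have key' : ∀ p q : Fin n, A p = A q → q.val ≤ p.val + 1 := by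
    intro p q hpq
    have hp := p.isLt; have hq := q.isLt
    simp only [A] at hpq
    omega
  have htri : ∀ x y z : Fin n, A x = A y → A x = A z → x = y ∨ x = z ∨ y = z := by
    intro x y z h1 h2
    by_contra hcon
    push_neg at hcon
    obtain ⟨hxy, hxz, hyz⟩ := hcon
    have e1 := key' x y h1
    have e2 := key' y x h1.symm
    have e3 := key' x z h2
    have e4 := key' z x h2.symm
    have e5 := key' y z (h1.symm.trans h2)
    have e6 := key' z y (h2.symm.trans h1)
    have vxy : x.val ≠ y.val := fun e => hxy (Fin.ext e)
    have vxz : x.val ≠ z.val := fun e => hxz (Fin.ext e)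
    have vyz : y.val ≠ z.val := fun e => hyz (Fin.ext e)
    omega
  have main : ∀ a : ℕ, ∃ t : V → ℤ, (∀ w, t w = 1 ∨ t w = -1) ∧
      ∀ u v, G.Adj u v → A (c u) = a → A (c v) = a → t u * t v = - σ u v := by
    intro a
    have hac : (G.induce {v | A (c v) = a}).IsAcyclic := by
      by_cases hex : ∃ v : V, A (c v) = a
      · obtain ⟨v0, hv0⟩ := hex
        by_cases hj : ∃ y : Fin n, y ≠ c v0 ∧ A y = a
        · obtain ⟨j, hji, hja⟩ := hj
          have hset : {v | A (c v) = a} = {v | c v = c v0 ∨ c v = j} := by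
            ext x
            simp only [Set.mem_setOf_eq]
            constructor
            · intro hx
              rcases htri (c v0) (c x) j (by rw [hv0, hx]) (by rw [hv0, hja]) with
                hh | hh | hh
              · exact Or.inl hh.symm
              · exact absurd hh.symm hji
              · exact Or.inr hh
            · rintro (hh | hh)
              · rw [hh, hv0]
              · rw [hh, hja]
          rw [hset]; exact hacyc _ _
        · push_neg at hj
          have hset : {v | A (c v) = a} = {v | c v = c v0 ∨ c v = c v0} := by
            ext x
            simp only [Set.mem_setOf_eq, or_self]
            constructor
            · intro hx
              by_contra hne
              exact hj (c x) hne hx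
            · intro hh; rw [hh, hv0]
          rw [hset]; exact hacyc _ _
      · intro v w hw
        exact hex ⟨v.1, v.2⟩
    obtain ⟨s, hs1, hs2⟩ := forest_signs _ hac (fun x y => -σ x.1 y.1)
      (fun x y => by show -σ x.1 y.1 = -σ y.1 x.1; rw [hσ.1 x.1 y.1])
      (fun x y _ => by rcases hσ.2 x.1 y.1 with hh | hh <;> simp [hh])
    refine ⟨fun v => if hv : A (c v) = a then s ⟨v, hv⟩ else 1, fun w => ?_, ?_⟩
    · dsimp only
      split
      · exact hs1 _
      · exact Or.inl rfl
    · intro u v huv hu hv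
      simp only [dif_pos hu, dif_pos hv]
      exact hs2 ⟨u, hu⟩ ⟨v, hv⟩ huv
  choose t ht1 ht2 using main
  have hle : ∀ i : Fin n, 2 * A i ≤ n := by
    intro i
    have := i.isLt
    simp only [A]
    omega
  have hA0 : ∀ i : Fin n, A i = 0 → i.val = 0 ∧ n % 2 = 1 := by
    intro i hi
    have := i.isLt
    simp only [A] at hi
    omega
  refine Nat.sInf_le ⟨fun v => t (A (c v)) v * (A (c v) : ℤ), ?_, ?_⟩
  · intro u v huv heq
    dsimp only at heq
    have hne := hproper u v huv
    by_cases hab : A (c u) = A (c v)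
    · have hc0 : A (c u) ≠ 0 := by
        intro h0
        have h0' : A (c v) = 0 := hab ▸ h0
        exact hne (Fin.ext (by rw [(hA0 _ h0).1, (hA0 _ h0').1]))
      have hk := ht2 (A (c u)) u v huv rfl hab.symm
      rw [← hab] at heq
      have ha1 : (1 : ℤ) ≤ (A (c u) : ℤ) := by exact_mod_cast Nat.one_le_iff_ne_zero.mpr hc0
      rcases ht1 (A (c u)) u with h1 | h1 <;> rcases ht1 (A (c u)) v with h2 | h2 <;>
        rcases hσ.2 u v with h3 | h3 <;>
        rw [h1, h2, h3] at hk heq <;> norm_num at hk <;> norm_num at heq <;> omega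
    · apply hab
      have hnat := congrArg Int.natAbs heq
      rw [Int.natAbs_mul, Int.natAbs_mul] at hnat
      have n1 : (t (A (c u)) u).natAbs = 1 := by
        rcases ht1 (A (c u)) u with h1 | h1 <;> rw [h1] <;> rfl
      have n2 : (t (A (c v)) v).natAbs = 1 := by
        rcases ht1 (A (c v)) v with h1 | h1 <;> rw [h1] <;> rfl
      have n3 : (σ u v).natAbs = 1 := by
        rcases hσ.2 u v with h1 | h1 <;> rw [h1] <;> rfl
      simpa [Int.natAbs_mul, n1, n2, n3] using hnat
  · intro v
    dsimp only
    constructor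
    · have hnat : (t (A (c v)) v * (A (c v) : ℤ)).natAbs = A (c v) := by
        rcases ht1 (A (c v)) v with h1 | h1 <;> rw [h1] <;> simp
      rw [hnat]
      exact hle _
    · by_cases h0 : A (c v) = 0
      · exact Or.inr (hA0 _ h0).2
      · left
        have ha1 : (A (c v) : ℤ) ≠ 0 := by exact_mod_cast h0
        rcases ht1 (A (c v)) v with h1 | h1 <;> rw [h1] <;> simpa using ha1
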